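/- Necessary and sufficient condition for optimality via reward differences (Lemma 3): let Ω be a measurable space, Q a probability measure on Ω, r : Ω → ℝ a bounded measurable function, β > 0, Z = ∫ exp(r(x)/β) dQ(x), and Q* = Q.withDensity (fun x => exp(r(x)/β) / Z). Let P be a probability measure on Ω of the form P = Q.withDensity p for a measurable function p : Ω → ℝ with p(x) > 0 for Q-almost every x. Then P = Q* if and only if log p(x) − log p(y) = (r(x) − r(y)) / β for (Q ⊗ Q)-almost every pair (x, y) ∈ Ω × Ω. -/
import Mathlib


open MeasureTheory Real ENNReal
open scoped Classical

/-- The Kullback–Leibler divergence between two measures, valued in the extended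
nonnegative reals. It is finite exactly when `μ ≪ ν` and the log-likelihood ratio
`llr μ ν` is `μ`-integrable, in which case it equals `∫ x, llr μ ν x ∂μ`. -/

noncomputable def klDiv {Ω : Type*} [MeasurableSpace Ω] (μ ν : Measure Ω) : ℝ≥0∞ :=
  if μ ≪ ν ∧ Integrable (llr μ ν) μ then ENNReal.ofReal (∫ x, llr μ ν x ∂μ) else ⊤


/-- Necessary and sufficient condition for optimality via reward differences (Lemma 3):
a probability measure `P = Q.withDensity p` with `Q`-a.e. positive density `p` equals
the tilted optimal measure `Q*` if and only if, for `(Q ⊗ Q)`-almost every pair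
`(x, y)`, the difference of log densities predicts the scaled reward difference:
`log (p x) - log (p y) = (r x - r y) / β`. -/
theorem eq_tilted_iff_log_density_diff_eq_reward_diff
    {Ω : Type*} [MeasurableSpace Ω] (Q : Measure Ω) [IsProbabilityMeasure Q]
    (r : Ω → ℝ) (hr : Measurable r) (hr_bdd : ∃ C : ℝ, ∀ x, |r x| ≤ C)
    (β : ℝ) (hβ : 0 < β)
    (Z : ℝ) (hZ : Z = ∫ x, exp (r x / β) ∂Q)
    (Qstar : Measure Ω)
    (hQstar : Qstar = Q.withDensity (fun x => ENNReal.ofReal (exp (r x / β) / Z)))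
    (p : Ω → ℝ) (hp : Measurable p) (hp_pos : ∀ᵐ x ∂Q, 0 < p x)
    (P : Measure Ω) (hP : P = Q.withDensity (fun x => ENNReal.ofReal (p x)))
    [IsProbabilityMeasure P] :
    P = Qstar ↔
      ∀ᵐ xy : Ω × Ω ∂(Q.prod Q),
        Real.log (p xy.1) - Real.log (p xy.2) = (r xy.1 - r xy.2) / β := by
  obtain ⟨C, hC⟩ := hr_bdd
  have hexp_meas : Measurable fun x => exp (r x / β) := (hr.div_const β).exp
  have hint : Integrable (fun x => exp (r x / β)) Q := by
    refine (integrable_const (exp (C / β))).mono' hexp_meas.aestronglyMeasurable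
      (ae_of_all _ fun x => ?_)
    rw [Real.norm_eq_abs, abs_of_pos (exp_pos _)]
    exact exp_le_exp.2 ((div_le_div_iff_of_pos_right hβ).2 (abs_le.1 (hC x)).2)
  have hZpos : 0 < Z := by
    have hle : exp (-C / β) ≤ Z := by
      rw [hZ]
      calc exp (-C / β) = ∫ _x, exp (-C / β) ∂Q := by simp
        _ ≤ ∫ x, exp (r x / β) ∂Q :=
          integral_mono (integrable_const _) hint
            (fun x => exp_le_exp.2 ((div_le_div_iff_of_pos_right hβ).2 (abs_le.1 (hC x)).1))
    exact lt_of_lt_of_le (exp_pos _) hle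
  have hq_pos : ∀ x, 0 < exp (r x / β) / Z := fun x => div_pos (exp_pos _) hZpos
  have hlint : ∫⁻ x, ENNReal.ofReal (p x) ∂Q = 1 := by
    have h1 : P Set.univ = 1 := measure_univ
    rwa [hP, withDensity_apply _ MeasurableSet.univ, setLIntegral_univ] at h1
  constructor
  · intro hPQ
    have hae : (fun x => ENNReal.ofReal (p x)) =ᵐ[Q]
        fun x => ENNReal.ofReal (exp (r x / β) / Z) := by
      rw [← withDensity_eq_iff hp.ennreal_ofReal.aemeasurable
        ((hexp_meas.div_const Z).ennreal_ofReal.aemeasurable) (by rw [hlint]; exact one_ne_top)]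
      rw [← hP, ← hQstar, hPQ]
    have hlog : ∀ᵐ x ∂Q, Real.log (p x) = r x / β - Real.log Z := by
      filter_upwards [hae, hp_pos] with x hx hxp
      have hpx : p x = exp (r x / β) / Z :=
        (ENNReal.ofReal_eq_ofReal_iff hxp.le (hq_pos x).le).1 hx
      rw [hpx, Real.log_div (exp_ne_zero _) (ne_of_gt hZpos), Real.log_exp]
    have h1 : ∀ᵐ xy : Ω × Ω ∂Q.prod Q, Real.log (p xy.1) = r xy.1 / β - Real.log Z :=
      Measure.quasiMeasurePreserving_fst.ae hlog
    have h2 : ∀ᵐ xy : Ω × Ω ∂Q.prod Q, Real.log (p xy.2) = r xy.2 / β - Real.log Z :=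
      Measure.quasiMeasurePreserving_snd.ae hlog
    filter_upwards [h1, h2] with xy e1 e2
    rw [e1, e2, sub_div]
    ring
  · intro h
    have h' : ∀ᵐ xy : Ω × Ω ∂Q.prod Q,
        Real.log (p xy.1) - r xy.1 / β = Real.log (p xy.2) - r xy.2 / β := by
      filter_upwards [h] with xy hxy
      have := sub_div (r xy.1) (r xy.2) β
      linarith
    have h'' := Measure.ae_ae_of_ae_prod h'
    haveI : (ae Q).NeBot := ae_neBot.mpr (IsProbabilityMeasure.ne_zero Q)
    obtain ⟨x0, hx0⟩ := h''.exists
    set c : ℝ := Real.log (p x0) - r x0 / β with hc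
    have hpy : ∀ᵐ y ∂Q, p y = exp c * exp (r y / β) := by
      filter_upwards [hx0, hp_pos] with y hy hyp
      have hly : Real.log (p y) = c + r y / β := by rw [hc]; linarith
      rw [← Real.exp_log hyp, hly, Real.exp_add]
    have hint2 : Integrable (fun y => exp c * exp (r y / β)) Q := hint.const_mul _
    have hcalc : ∫⁻ x, ENNReal.ofReal (p x) ∂Q = ENNReal.ofReal (exp c * Z) := by
      rw [lintegral_congr_ae (hpy.mono fun y hy => by rw [hy]),
        ← ofReal_integral_eq_lintegral_ofReal hint2
          (ae_of_all _ fun y => (mul_pos (exp_pos _) (exp_pos _)).le),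
        integral_const_mul, ← hZ]
    have hec : exp c * Z = 1 := by
      rw [hcalc] at hlint
      exact ENNReal.ofReal_eq_one.1 hlint
    have hexpc : exp c = Z⁻¹ := by
      field_simp at hec ⊢
      linarith
    have hfinal : ∀ᵐ y ∂Q, p y = exp (r y / β) / Z := by
      filter_upwards [hpy] with y hy
      rw [hy, hexpc, inv_mul_eq_div]
    rw [hP, hQstar]
    exact withDensity_congr_ae (hfinal.mono fun y hy => by simp only [hy])
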